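/- Let a, b, p, q be positive real numbers and x ∈ (0,1). Then the generalized polylogarithm satisfies the Turán-type inequality Φ_{p,q}(a,b;x) · Φ_{p+2,q}(a,b;x) − Φ_{p+1,q}(a,b;x)^2 ≥ 0. -/

import Mathlib

/-- The generalized polylogarithm with real parameters. -/
noncomputable def genPolylogR (p q a b x : ℝ) : ℝ :=
  ∑' k : ℕ, ((1 + a) ^ p * (1 + b) ^ q /
      (((k : ℝ) + 1 + a) ^ p * ((k : ℝ) + 1 + b) ^ q)) * x ^ (k + 1)

/-- Cauchy-Schwarz for tsums of nonnegative real sequences. -/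
lemma tsum_cauchy_schwarz (f g : ℕ → ℝ) (hf0 : ∀ k, 0 ≤ f k) (hg0 : ∀ k, 0 ≤ g k)
    (hf : Summable (fun k => f k ^ 2)) (hg : Summable (fun k => g k ^ 2)) :
    (∑' k, f k * g k) ^ 2 ≤ (∑' k, f k ^ 2) * ∑' k, g k ^ 2 := by
  have hfg : Summable (fun k => f k * g k) := by
    apply Summable.of_nonneg_of_le (fun k => mul_nonneg (hf0 k) (hg0 k))
      (fun k => ?_) ((hf.add hg).mul_left (1/2 : ℝ))
    have := two_mul_le_add_sq (f k) (g k)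
    nlinarith [this]
  have hA : 0 ≤ ∑' k, f k ^ 2 := tsum_nonneg (fun k => sq_nonneg _)
  have hB : 0 ≤ ∑' k, g k ^ 2 := tsum_nonneg (fun k => sq_nonneg _)
  have key : ∑' k, f k * g k ≤ Real.sqrt ((∑' k, f k ^ 2) * ∑' k, g k ^ 2) := by
    apply Summable.tsum_le_of_sum_le hfg
    intro s
    have h1 : (∑ i ∈ s, f i * g i) ^ 2 ≤ (∑ i ∈ s, f i ^ 2) * ∑ i ∈ s, g i ^ 2 :=
      Finset.sum_mul_sq_le_sq_mul_sq s f g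
    have h2 : (∑ i ∈ s, f i ^ 2) ≤ ∑' k, f k ^ 2 :=
      Summable.sum_le_tsum s (fun i _ => sq_nonneg _) hf
    have h3 : (∑ i ∈ s, g i ^ 2) ≤ ∑' k, g k ^ 2 :=
      Summable.sum_le_tsum s (fun i _ => sq_nonneg _) hg
    have hs1 : (0:ℝ) ≤ ∑ i ∈ s, f i ^ 2 := Finset.sum_nonneg fun i _ => sq_nonneg _
    have hs2 : (0:ℝ) ≤ ∑ i ∈ s, g i ^ 2 := Finset.sum_nonneg fun i _ => sq_nonneg _
    have h4 : (∑ i ∈ s, f i * g i) ^ 2 ≤ (∑' k, f k ^ 2) * ∑' k, g k ^ 2 :=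
      h1.trans (mul_le_mul h2 h3 hs2 hA)
    calc ∑ i ∈ s, f i * g i ≤ |∑ i ∈ s, f i * g i| := le_abs_self _
      _ = Real.sqrt ((∑ i ∈ s, f i * g i) ^ 2) := (Real.sqrt_sq_eq_abs _).symm
      _ ≤ Real.sqrt ((∑' k, f k ^ 2) * ∑' k, g k ^ 2) := Real.sqrt_le_sqrt h4
  have hfg0 : 0 ≤ ∑' k, f k * g k := tsum_nonneg fun k => mul_nonneg (hf0 k) (hg0 k)
  calc (∑' k, f k * g k) ^ 2 ≤ Real.sqrt ((∑' k, f k ^ 2) * ∑' k, g k ^ 2) ^ 2 :=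
        pow_le_pow_left₀ hfg0 key 2
    _ = (∑' k, f k ^ 2) * ∑' k, g k ^ 2 := Real.sq_sqrt (mul_nonneg hA hB)

theorem generalized_polylog_turan_p
    (a b p q : ℝ) (ha : 0 < a) (hb : 0 < b) (hp : 0 < p) (hq : 0 < q)
    (x : ℝ) (hx : x ∈ Set.Ioo (0 : ℝ) 1) :
    0 ≤ genPolylogR p q a b x * genPolylogR (p + 2) q a b x -
          (genPolylogR (p + 1) q a b x) ^ 2 := by
  obtain ⟨hx0, hx1⟩ := hx
  -- basic positivity facts
  have hden : ∀ k : ℕ, (0:ℝ) < (k : ℝ) + 1 + a := fun k => by positivity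
  have hdenb : ∀ k : ℕ, (0:ℝ) < (k : ℝ) + 1 + b := fun k => by positivity
  have h1a : (0:ℝ) < 1 + a := by linarith
  have h1b : (0:ℝ) < 1 + b := by linarith
  -- the base term and the ratio
  set T : ℕ → ℝ := fun k => ((1 + a) ^ p * (1 + b) ^ q /
      (((k : ℝ) + 1 + a) ^ p * ((k : ℝ) + 1 + b) ^ q)) * x ^ (k + 1) with hT
  set t : ℕ → ℝ := fun k => (1 + a) / ((k : ℝ) + 1 + a) with ht
  have hT0 : ∀ k, 0 ≤ T k := by
    intro k
    have := hden k; have := hdenb k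
    apply mul_nonneg (div_nonneg (by positivity) (by positivity)) (by positivity)
  have ht0 : ∀ k, 0 < t k := fun k => div_pos h1a (hden k)
  have ht1 : ∀ k, t k ≤ 1 := by
    intro k
    rw [ht, div_le_one (hden k)]
    have : (0:ℝ) ≤ (k:ℝ) := Nat.cast_nonneg k
    linarith
  -- term identity: term at p + s equals T k * (t k)^s for natural s
  have hshift : ∀ (s : ℕ) (k : ℕ),
      ((1 + a) ^ (p + s) * (1 + b) ^ q /
        (((k : ℝ) + 1 + a) ^ (p + s) * ((k : ℝ) + 1 + b) ^ q)) * x ^ (k + 1)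
      = T k * (t k) ^ s := by
    intro s k
    have h1 : (1 + a) ^ (p + (s:ℝ)) = (1 + a) ^ p * (1 + a) ^ (s:ℕ) := by
      rw [Real.rpow_add h1a, Real.rpow_natCast]
    have h2 : ((k : ℝ) + 1 + a) ^ (p + (s:ℝ)) =
        ((k : ℝ) + 1 + a) ^ p * ((k : ℝ) + 1 + a) ^ (s:ℕ) := by
      rw [Real.rpow_add (hden k), Real.rpow_natCast]
    rw [h1, h2, hT, ht]
    have hka := (hden k).ne'
    have hkb := (hdenb k).ne'
    have hpow : (((k : ℝ) + 1 + a) ^ p) ≠ 0 := (Real.rpow_pos_of_pos (hden k) p).ne'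
    have hpowb : (((k : ℝ) + 1 + b) ^ q) ≠ 0 := (Real.rpow_pos_of_pos (hdenb k) q).ne'
    have hpown : (((k : ℝ) + 1 + a) ^ (s:ℕ)) ≠ 0 := pow_ne_zero s hka
    field_simp
    have hka' : (1 + a + (k:ℝ)) ≠ 0 := (by linarith [hden k] : (0:ℝ) < 1 + a + k).ne'
    rw [← mul_pow]; congr 1
    exact (mul_div_cancel₀ (1 + a) hka).symm
  -- summability of T
  have hTsum : Summable T := by
    apply Summable.of_nonneg_of_le hT0 (fun k => ?_)
      (((summable_geometric_of_lt_one hx0.le hx1).mul_left x))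
    have hfrac : (1 + a) ^ p * (1 + b) ^ q /
        (((k : ℝ) + 1 + a) ^ p * ((k : ℝ) + 1 + b) ^ q) ≤ 1 := by
      rw [div_le_one (by positivity)]
      have hA : (1 + a) ^ p ≤ ((k : ℝ) + 1 + a) ^ p :=
        Real.rpow_le_rpow h1a.le (by have : (0:ℝ) ≤ (k:ℝ) := Nat.cast_nonneg k; linarith) hp.le
      have hB : (1 + b) ^ q ≤ ((k : ℝ) + 1 + b) ^ q :=
        Real.rpow_le_rpow h1b.le (by have : (0:ℝ) ≤ (k:ℝ) := Nat.cast_nonneg k; linarith) hq.le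
      exact mul_le_mul hA hB (by positivity) (by positivity)
    calc T k ≤ 1 * x ^ (k + 1) := by
          apply mul_le_mul_of_nonneg_right hfrac (by positivity)
      _ = x * x ^ k := by rw [one_mul, pow_succ]; ring
  -- express the three polylogs via T and t
  have hG0 : genPolylogR p q a b x = ∑' k, T k := by
    unfold genPolylogR; rfl
  have hG1 : genPolylogR (p + 1) q a b x = ∑' k, T k * t k := by
    unfold genPolylogR
    apply tsum_congr
    intro k
    have := hshift 1 k
    simpa using this
  have hG2 : genPolylogR (p + 2) q a b x = ∑' k, T k * (t k) ^ 2 := by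
    unfold genPolylogR
    apply tsum_congr
    intro k
    have := hshift 2 k
    simpa using this
  -- Cauchy-Schwarz with f = √T, g = √T * t
  set f : ℕ → ℝ := fun k => Real.sqrt (T k) with hf
  set g : ℕ → ℝ := fun k => Real.sqrt (T k) * t k with hg
  have hf2 : ∀ k, f k ^ 2 = T k := fun k => Real.sq_sqrt (hT0 k)
  have hg2 : ∀ k, g k ^ 2 = T k * (t k) ^ 2 := by
    intro k; rw [hg]; rw [mul_pow, Real.sq_sqrt (hT0 k)]
  have hfgk : ∀ k, f k * g k = T k * t k := by
    intro k
    rw [hf, hg, show Real.sqrt (T k) * (Real.sqrt (T k) * t k) =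
      (Real.sqrt (T k) * Real.sqrt (T k)) * t k from by ring,
      Real.mul_self_sqrt (hT0 k)]
  have hsumf2 : Summable (fun k => f k ^ 2) := by simpa only [hf2] using hTsum
  have hsumg2 : Summable (fun k => g k ^ 2) := by
    simp only [hg2]
    apply Summable.of_nonneg_of_le (fun k => by positivity) (fun k => ?_) hTsum
    calc T k * (t k) ^ 2 ≤ T k * 1 := by
          apply mul_le_mul_of_nonneg_left ?_ (hT0 k)
          calc (t k)^2 ≤ 1^2 := pow_le_pow_left₀ (ht0 k).le (ht1 k) 2
            _ = 1 := one_pow 2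
      _ = T k := mul_one _
  have := tsum_cauchy_schwarz f g (fun k => Real.sqrt_nonneg _)
    (fun k => mul_nonneg (Real.sqrt_nonneg _) (ht0 k).le) hsumf2 hsumg2
  rw [hG0, hG1, hG2]
  simp only [hfgk, hf2, hg2] at this
  linarith
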